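/- The closed-form stationary distribution of the joint (source state, Version Innovation Age) chain under the randomized stationary policy satisfies the boundary balance equations p·π₀(0) = (1−p)·a·∑_{j≥1} π₀(j) + q·a·∑_{j≥0} π₁(j) and q·π₁(0) = (1−q)·a·∑_{j≥1} π₁(j) + p·a·∑_{j≥0} π₀(j), all the series being convergent. -/

import Mathlib

set_option linter.unusedVariables false

private lemma via_bal_aux1 (p q a : ℝ)
    (hp : 0 < p) (hp1 : p < 1) (hq : 0 < q) (hq1 : q < 1)
    (ha : 0 < a) (ha1 : a ≤ 1) :
    p * (q * a / ((p + q) * (p + (1 - p) * a))) =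
      (1 - p) * a * ((q * a / ((p + q) * (p + (1 - p) * a)) +
          p * q * a * (1 - a) / ((p + q) * (p + (1 - p) * a) * (q + (1 - q) * a))) *
        ((p + (1 - p) * a) * (q + (1 - q) * a) /
          ((p + (1 - p) * a) * (q + (1 - q) * a) - p * q * (1 - a) ^ 2)) -
        q * a / ((p + q) * (p + (1 - p) * a))) +
      q * a * ((p * a / ((p + q) * (q + (1 - q) * a)) +
          p * q * a * (1 - a) / ((p + q) * (p + (1 - p) * a) * (q + (1 - q) * a))) *
        ((p + (1 - p) * a) * (q + (1 - q) * a) /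
          ((p + (1 - p) * a) * (q + (1 - q) * a) - p * q * (1 - a) ^ 2))) := by
  have hApos : (0:ℝ) < p + (1 - p) * a := by nlinarith
  have hBpos : (0:ℝ) < q + (1 - q) * a := by nlinarith
  have h1 : p < p + (1 - p) * a := by nlinarith
  have h2 : q < q + (1 - q) * a := by nlinarith
  have h5 : (1 - a) ^ 2 ≤ 1 := by nlinarith
  have h3 : p * q * (1 - a) ^ 2 ≤ p * q := by nlinarith [mul_pos hp hq]
  have h4 : p * q < (p + (1 - p) * a) * (q + (1 - q) * a) :=
    mul_lt_mul'' h1 h2 hp.le hq.le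
  have hDpos : (0:ℝ) < (p + (1 - p) * a) * (q + (1 - q) * a) - p * q * (1 - a) ^ 2 := by
    linarith
  have hpq : p + q ≠ 0 := by positivity
  generalize hD : (p + (1 - p) * a) * (q + (1 - q) * a) - p * q * (1 - a) ^ 2 = D at hDpos ⊢
  have hDne : D ≠ 0 := hDpos.ne'
  generalize hA : p + (1 - p) * a = A at *
  generalize hB : q + (1 - q) * a = B at *
  have hAne : A ≠ 0 := hApos.ne'
  have hBne : B ≠ 0 := hBpos.ne'
  field_simp
  subst hD hA hB
  ring

private lemma via_bal_aux2 (p q a : ℝ)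
    (hp : 0 < p) (hp1 : p < 1) (hq : 0 < q) (hq1 : q < 1)
    (ha : 0 < a) (ha1 : a ≤ 1) :
    q * (p * a / ((p + q) * (q + (1 - q) * a))) =
      (1 - q) * a * ((p * a / ((p + q) * (q + (1 - q) * a)) +
          p * q * a * (1 - a) / ((p + q) * (p + (1 - p) * a) * (q + (1 - q) * a))) *
        ((p + (1 - p) * a) * (q + (1 - q) * a) /
          ((p + (1 - p) * a) * (q + (1 - q) * a) - p * q * (1 - a) ^ 2)) -
        p * a / ((p + q) * (q + (1 - q) * a))) +
      p * a * ((q * a / ((p + q) * (p + (1 - p) * a)) +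
          p * q * a * (1 - a) / ((p + q) * (p + (1 - p) * a) * (q + (1 - q) * a))) *
        ((p + (1 - p) * a) * (q + (1 - q) * a) /
          ((p + (1 - p) * a) * (q + (1 - q) * a) - p * q * (1 - a) ^ 2))) := by
  have hApos : (0:ℝ) < p + (1 - p) * a := by nlinarith
  have hBpos : (0:ℝ) < q + (1 - q) * a := by nlinarith
  have h1 : p < p + (1 - p) * a := by nlinarith
  have h2 : q < q + (1 - q) * a := by nlinarith
  have h5 : (1 - a) ^ 2 ≤ 1 := by nlinarith
  have h3 : p * q * (1 - a) ^ 2 ≤ p * q := by nlinarith [mul_pos hp hq]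
  have h4 : p * q < (p + (1 - p) * a) * (q + (1 - q) * a) :=
    mul_lt_mul'' h1 h2 hp.le hq.le
  have hDpos : (0:ℝ) < (p + (1 - p) * a) * (q + (1 - q) * a) - p * q * (1 - a) ^ 2 := by
    linarith
  have hpq : p + q ≠ 0 := by positivity
  generalize hD : (p + (1 - p) * a) * (q + (1 - q) * a) - p * q * (1 - a) ^ 2 = D at hDpos ⊢
  have hDne : D ≠ 0 := hDpos.ne'
  generalize hA : p + (1 - p) * a = A at *
  generalize hB : q + (1 - q) * a = B at *
  have hAne : A ≠ 0 := hApos.ne'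
  have hBne : B ≠ 0 := hBpos.ne'
  field_simp
  subst hD hA hB
  ring


/-- Boundary balance equations for the stationary distribution of the joint
(source state, Version Innovation Age) chain under the randomized stationary policy,
all the series being convergent. -/
theorem via_boundary_balance (p q a : ℝ)
    (hp : 0 < p) (hp1 : p < 1) (hq : 0 < q) (hq1 : q < 1)
    (ha : 0 < a) (ha1 : a ≤ 1)
    (Φ : ℝ → ℝ) (hΦ : ∀ x, Φ x = x + (1 - x) * a)
    (k w : ℕ → ℕ)
    (hk : ∀ i, k i = if Even i then i / 2 else (i + 1) / 2)
    (hw : ∀ i, w i = if Even i then (i + 2) / 2 else (i + 1) / 2)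
    (π₀ π₁ : ℕ → ℝ)
    (hπ₀ : ∀ i, π₀ i = p ^ k i * q ^ w i * a * (1 - a) ^ i /
      ((p + q) * Φ p ^ w i * Φ q ^ k i))
    (hπ₁ : ∀ i, π₁ i = p ^ w i * q ^ k i * a * (1 - a) ^ i /
      ((p + q) * Φ p ^ k i * Φ q ^ w i)) :
    Summable π₀ ∧ Summable π₁ ∧
    p * π₀ 0 = (1 - p) * a * (∑' j : ℕ, π₀ (j + 1)) + q * a * (∑' j : ℕ, π₁ j) ∧
    q * π₁ 0 = (1 - q) * a * (∑' j : ℕ, π₁ (j + 1)) + p * a * (∑' j : ℕ, π₀ j) := by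
  simp only [hΦ] at hπ₀ hπ₁
  have hApos : (0:ℝ) < p + (1 - p) * a := by nlinarith
  have hBpos : (0:ℝ) < q + (1 - q) * a := by nlinarith
  have hAne : p + (1 - p) * a ≠ 0 := ne_of_gt hApos
  have hBne : q + (1 - q) * a ≠ 0 := ne_of_gt hBpos
  have hpq : p + q ≠ 0 := by positivity
  have h1 : p < p + (1 - p) * a := by nlinarith
  have h2 : q < q + (1 - q) * a := by nlinarith
  have h5 : (1 - a) ^ 2 ≤ 1 := by nlinarith
  have h3 : p * q * (1 - a) ^ 2 ≤ p * q := by nlinarith [mul_pos hp hq]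
  have h4 : p * q < (p + (1 - p) * a) * (q + (1 - q) * a) :=
    mul_lt_mul'' h1 h2 hp.le hq.le
  have hDpos : (0:ℝ) < (p + (1 - p) * a) * (q + (1 - q) * a) - p * q * (1 - a) ^ 2 := by
    linarith
  set t : ℝ := p * q * (1 - a) ^ 2 / ((p + (1 - p) * a) * (q + (1 - q) * a)) with htdef
  have ht0 : 0 ≤ t := by
    rw [htdef]; positivity
  have ht1 : t < 1 := by
    rw [htdef, div_lt_one (by positivity)]; linarith
  have htne : 1 - t ≠ 0 := by linarith
  have hinv : (1 - t)⁻¹ = (p + (1 - p) * a) * (q + (1 - q) * a) /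
      ((p + (1 - p) * a) * (q + (1 - q) * a) - p * q * (1 - a) ^ 2) := by
    rw [show 1 - t = ((p + (1 - p) * a) * (q + (1 - q) * a) - p * q * (1 - a) ^ 2) /
        ((p + (1 - p) * a) * (q + (1 - q) * a)) by rw [htdef, sub_div, div_self (ne_of_gt (mul_pos hApos hBpos))], inv_div]
  -- exponents
  have hk2 : ∀ m : ℕ, k (2 * m) = m := by
    intro m; rw [hk, if_pos ⟨m, by ring⟩]; omega
  have hw2 : ∀ m : ℕ, w (2 * m) = m + 1 := by
    intro m; rw [hw, if_pos ⟨m, by ring⟩]; omega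
  have hodd : ∀ m : ℕ, ¬ Even (2 * m + 1) := by
    intro m; rintro ⟨r, hr⟩; omega
  have hk2' : ∀ m : ℕ, k (2 * m + 1) = m + 1 := by
    intro m; rw [hk, if_neg (hodd m)]; omega
  have hw2' : ∀ m : ℕ, w (2 * m + 1) = m + 1 := by
    intro m; rw [hw, if_neg (hodd m)]; omega
  set c0 : ℝ := q * a / ((p + q) * (p + (1 - p) * a)) with hc0
  set c1 : ℝ := p * q * a * (1 - a) / ((p + q) * (p + (1 - p) * a) * (q + (1 - q) * a)) with hc1
  set d0 : ℝ := p * a / ((p + q) * (q + (1 - q) * a)) with hd0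
  clear_value t c0 c1 d0
  have he0 : ∀ m : ℕ, π₀ (2 * m) = c0 * t ^ m := by
    intro m
    rw [hπ₀, hk2, hw2, hc0, htdef, div_pow, mul_pow, mul_pow, mul_pow, ← pow_mul]
    field_simp
    ring
  have ho0 : ∀ m : ℕ, π₀ (2 * m + 1) = c1 * t ^ m := by
    intro m
    rw [hπ₀, hk2', hw2', hc1, htdef, div_pow, mul_pow, mul_pow, mul_pow, ← pow_mul]
    rw [pow_succ (1 - a)]
    field_simp
    ring
  have he1 : ∀ m : ℕ, π₁ (2 * m) = d0 * t ^ m := by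
    intro m
    rw [hπ₁, hk2, hw2, hd0, htdef, div_pow, mul_pow, mul_pow, mul_pow, ← pow_mul]
    field_simp
    ring
  have ho1 : ∀ m : ℕ, π₁ (2 * m + 1) = c1 * t ^ m := by
    intro m
    rw [hπ₁, hk2', hw2', hc1, htdef, div_pow, mul_pow, mul_pow, mul_pow, ← pow_mul]
    rw [pow_succ (1 - a)]
    field_simp
    ring
  have hgeo : Summable (fun m : ℕ => t ^ m) := summable_geometric_of_lt_one ht0 ht1
  have htsum : ∑' m : ℕ, t ^ m = (1 - t)⁻¹ := tsum_geometric_of_lt_one ht0 ht1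
  have hs0e : Summable (fun m : ℕ => π₀ (2 * m)) := by
    simpa [he0] using hgeo.mul_left c0
  have hs0o : Summable (fun m : ℕ => π₀ (2 * m + 1)) := by
    simpa [ho0] using hgeo.mul_left c1
  have hs1e : Summable (fun m : ℕ => π₁ (2 * m)) := by
    simpa [he1] using hgeo.mul_left d0
  have hs1o : Summable (fun m : ℕ => π₁ (2 * m + 1)) := by
    simpa [ho1] using hgeo.mul_left c1
  have hS0 : Summable π₀ := hs0e.even_add_odd hs0o
  have hS1 : Summable π₁ := hs1e.even_add_odd hs1o
  have hT0 : ∑' j : ℕ, π₀ j = (c0 + c1) * (1 - t)⁻¹ := by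
    rw [← tsum_even_add_odd hs0e hs0o]
    simp only [he0, ho0]
    rw [tsum_mul_left, tsum_mul_left, htsum]
    ring
  have hT1 : ∑' j : ℕ, π₁ j = (d0 + c1) * (1 - t)⁻¹ := by
    rw [← tsum_even_add_odd hs1e hs1o]
    simp only [he1, ho1]
    rw [tsum_mul_left, tsum_mul_left, htsum]
    ring
  have hz0 : π₀ 0 = c0 := by simpa using he0 0
  have hz1 : π₁ 0 = d0 := by simpa using he1 0
  have hshift0 : ∑' j : ℕ, π₀ (j + 1) = (c0 + c1) * (1 - t)⁻¹ - c0 := by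
    have := Summable.tsum_eq_zero_add hS0
    rw [hT0, hz0] at this; linarith
  have hshift1 : ∑' j : ℕ, π₁ (j + 1) = (d0 + c1) * (1 - t)⁻¹ - d0 := by
    have := Summable.tsum_eq_zero_add hS1
    rw [hT1, hz1] at this; linarith
  refine ⟨hS0, hS1, ?_, ?_⟩
  · rw [hz0, hshift0, hT1, hinv, hc0, hc1, hd0]
    exact via_bal_aux1 p q a hp hp1 hq hq1 ha ha1
  · rw [hz1, hshift1, hT0, hinv, hc0, hc1, hd0]
    exact via_bal_aux2 p q a hp hp1 hq hq1 ha ha1
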